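/- Robinson's recursion for counting DAGs: For n ≥ 0, let a(n) denote the number of directed acyclic graphs on the labeled vertex set {1, …, n}, i.e., the number of irreflexive relations r on Fin n admitting no directed cycle (equivalently, whose transitive closure is irreflexive). Then a(0) = 1 and for n ≥ 1, a(n) = Σ_{k=1}^{n} (−1)^{k+1} · C(n, k) · 2^{k(n−k)} · a(n−k). In particular a(5) = 29281. -/

import Mathlib

/-- The number of directed acyclic graphs on the labeled vertex set `{1, …, n}`: irreflexive
relations on `Fin n` with no directed cycle (i.e., whose transitive closure is irreflexive). -/
noncomputable def numDAGs (n : ℕ) : ℕ :=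
  Nat.card {r : Fin n → Fin n → Bool //
    (∀ v, r v v = false) ∧ ∀ v, ¬ Relation.TransGen (fun i j => r i j = true) v v}

open Relation Finset

set_option linter.unusedSectionVars false

/-- The DAG predicate on a boolean relation. -/
def IsDagRel {α : Type*} (r : α → α → Bool) : Prop :=
  (∀ v, r v v = false) ∧ ∀ v, ¬ Relation.TransGen (fun i j => r i j = true) v v

/-- Number of DAG relations on an arbitrary type. -/
noncomputable def dagCount (α : Type*) : ℕ := Nat.card {r : α → α → Bool // IsDagRel r}

lemma numDAGs_eq_dagCount (n : ℕ) : numDAGs n = dagCount (Fin n) := rfl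

/-- transport DAG relations along an equiv -/
def dagRelEquiv {α β : Type*} (e : α ≃ β) :
    {r : α → α → Bool // IsDagRel r} ≃ {r : β → β → Bool // IsDagRel r} where
  toFun r := ⟨fun i j => r.1 (e.symm i) (e.symm j), by
    obtain ⟨r, hirr, hacy⟩ := r
    refine ⟨fun v => hirr _, fun v hv => hacy (e.symm v) ?_⟩
    exact hv.lift e.symm (fun a b h => h)⟩
  invFun r := ⟨fun i j => r.1 (e i) (e j), by
    obtain ⟨r, hirr, hacy⟩ := r
    refine ⟨fun v => hirr _, fun v hv => hacy (e v) ?_⟩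
    exact hv.lift e (fun a b h => h)⟩
  left_inv r := by ext i j; simp
  right_inv r := by ext i j; simp

lemma dagCount_congr {α β : Type*} (e : α ≃ β) : dagCount α = dagCount β :=
  Nat.card_congr (dagRelEquiv e)

/-- every finite nonempty DAG has a sink -/
lemma exists_sink {α : Type*} [Finite α] [Nonempty α] {r : α → α → Bool} (h : IsDagRel r) :
    ∃ v, ∀ w, r v w = false := by
  by_contra hcon
  push_neg at hcon
  have hstep : ∀ v, ∃ w, r v w = true := by
    intro v
    obtain ⟨w, hw⟩ := hcon v
    exact ⟨w, by simpa using hw⟩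
  choose f hf using hstep
  obtain ⟨v⟩ := ‹Nonempty α›
  obtain ⟨i, j, hij, heq⟩ : ∃ i j : ℕ, i ≠ j ∧ f^[i] v = f^[j] v := by
    obtain ⟨i, j, hij, heq⟩ := Finite.exists_ne_map_eq_of_infinite (fun k : ℕ => f^[k] v)
    exact ⟨i, j, hij, heq⟩
  wlog hlt : i < j generalizing i j
  · exact this j i hij.symm heq.symm (by omega)
  have hkey : Relation.TransGen (fun i j => r i j = true) (f^[i] v) (f^[i] v) := by
    have h2 : Relation.TransGen (fun a b => r a b = true) (f^[i] v)
        (f^[(j - i - 1) + 1] (f^[i] v)) := by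
      generalize f^[i] v = x
      induction (j - i - 1) with
      | zero => exact TransGen.single (hf x)
      | succ k ih =>
        rw [Function.iterate_succ_apply']
        exact ih.tail (hf _)
    rwa [← Function.iterate_add_apply, show (j - i - 1) + 1 + i = j by omega, ← heq] at h2
  exact h.2 _ hkey

variable {α : Type*} [DecidableEq α] (S : Finset α)

/-- if every vertex of S is a sink, transgen paths between vertices outside S restrict -/
lemma transGen_restrict {r : α → α → Bool} (hS : ∀ v ∈ S, ∀ w, r v w = false)
    {a b : α} (h : Relation.TransGen (fun i j => r i j = true) a b)
    (ha : a ∉ S) (hb : b ∉ S) :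
    Relation.TransGen (fun i j : {x // x ∉ S} => r i j = true) ⟨a, ha⟩ ⟨b, hb⟩ := by
  induction h with
  | single h => exact TransGen.single h
  | tail hab hbc ih =>
    rename_i b' c'
    have hb' : b' ∉ S := by
      intro hmem
      rw [hS b' hmem c'] at hbc
      exact Bool.false_ne_true hbc
    exact (ih hb').tail hbc

/-- gluing a bipartite part and a DAG on the complement into a relation -/
def glue (f : {x // x ∉ S} → {x // x ∈ S} → Bool) (r' : {x // x ∉ S} → {x // x ∉ S} → Bool)
    (v w : α) : Bool :=
  if hv : v ∈ S then false
  else if hw : w ∈ S then f ⟨v, hv⟩ ⟨w, hw⟩ else r' ⟨v, hv⟩ ⟨w, hw⟩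

lemma isDagRel_glue {f : {x // x ∉ S} → {x // x ∈ S} → Bool}
    {r' : {x // x ∉ S} → {x // x ∉ S} → Bool} (h : IsDagRel r') :
    IsDagRel (glue S f r') ∧ ∀ v ∈ S, ∀ w, glue S f r' v w = false := by
  have hS : ∀ v ∈ S, ∀ w, glue S f r' v w = false := fun v hv w => dif_pos hv
  refine ⟨⟨?_, ?_⟩, hS⟩
  · intro v
    by_cases hv : v ∈ S
    · exact hS v hv v
    · simp only [glue, dif_neg hv]
      exact h.1 ⟨v, hv⟩
  · intro v hv
    have hvS : v ∉ S := by
      obtain ⟨w, hw, -⟩ := (Relation.TransGen.head'_iff).mp hv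
      intro hmem
      rw [hS v hmem w] at hw
      exact Bool.false_ne_true hw
    have := transGen_restrict S hS hv hvS hvS
    have lift : Relation.TransGen (fun i j : {x // x ∉ S} => r' i j = true)
        ⟨v, hvS⟩ ⟨v, hvS⟩ := by
      refine this.lift id ?_
      intro a b hab
      simpa only [Function.onFun, id, Subtype.coe_eta, glue, dif_neg a.2, dif_neg b.2] using hab
    exact h.2 _ lift

lemma isDagRel_restrict {r : α → α → Bool} (h : IsDagRel r) :
    IsDagRel (fun i j : {x // x ∉ S} => r i j) := by
  refine ⟨fun v => h.1 v, fun v hv => h.2 v.1 ?_⟩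
  exact hv.lift Subtype.val (fun a b hab => hab)

/-- the main decomposition equivalence -/
def sinkEquiv : {r : α → α → Bool // IsDagRel r ∧ ∀ v ∈ S, ∀ w, r v w = false} ≃
    ({x // x ∉ S} → {x // x ∈ S} → Bool) ×
      {r' : {x // x ∉ S} → {x // x ∉ S} → Bool // IsDagRel r'} where
  toFun r := ⟨fun a b => r.1 a b, ⟨fun a b => r.1 a b, isDagRel_restrict S r.2.1⟩⟩
  invFun p := ⟨glue S p.1 p.2.1, isDagRel_glue S p.2.2⟩
  left_inv := by
    rintro ⟨r, hdag, hsink⟩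
    ext v w
    simp only [glue]
    split
    · next hv => exact (hsink v hv w).symm
    · split <;> rfl
  right_inv := by
    rintro ⟨f, r', h⟩
    refine Prod.ext ?_ (Subtype.ext ?_)
    · ext a b
      simp only [glue, dif_neg a.2, dif_pos b.2]
    · ext a b
      simp only [glue, dif_neg a.2, dif_neg b.2]

lemma card_sinks {n : ℕ} (S : Finset (Fin n)) :
    Nat.card {r : Fin n → Fin n → Bool // IsDagRel r ∧ ∀ v ∈ S, ∀ w, r v w = false} =
      2 ^ (S.card * (n - S.card)) * numDAGs (n - S.card) := by
  rw [Nat.card_congr (sinkEquiv S), Nat.card_prod]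
  have hin : Nat.card {x : Fin n // x ∈ S} = S.card := by
    simp [Nat.card_eq_fintype_card]
  have hout : Nat.card {x : Fin n // x ∉ S} = n - S.card := by
    rw [Nat.card_eq_fintype_card, Fintype.card_subtype_compl]
    simp
  have hfun : Nat.card ({x : Fin n // x ∉ S} → {x : Fin n // x ∈ S} → Bool) =
      2 ^ (S.card * (n - S.card)) := by
    rw [Nat.card_fun, Nat.card_fun, hin, hout]
    rw [Nat.card_eq_fintype_card (α := Bool), Fintype.card_bool, ← pow_mul]
  rw [hfun]
  congr 1
  have e : {x : Fin n // x ∉ S} ≃ Fin (n - S.card) := by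
    apply Fintype.equivFinOfCardEq
    rw [← Nat.card_eq_fintype_card, hout]
  calc Nat.card {r' : {x : Fin n // x ∉ S} → {x : Fin n // x ∉ S} → Bool // IsDagRel r'}
      = dagCount {x : Fin n // x ∉ S} := rfl
    _ = dagCount (Fin (n - S.card)) := dagCount_congr e
    _ = numDAGs (n - S.card) := rfl

theorem dag_recursion (n : ℕ) (hn : 1 ≤ n) :
    (numDAGs n : ℤ) = ∑ k ∈ Finset.Icc 1 n,
      (-1 : ℤ) ^ (k + 1) * (n.choose k : ℤ) * 2 ^ (k * (n - k)) * (numDAGs (n - k) : ℤ) := by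
  classical
  haveI : NeZero n := ⟨by omega⟩
  set D := {r : Fin n → Fin n → Bool // IsDagRel r} with hD
  haveI : Fintype D := Fintype.ofFinite D
  set T : (Fin n → Fin n → Bool) → Finset (Fin n) :=
    fun r => univ.filter (fun v => ∀ w, r v w = false) with hT
  have hTne : ∀ r : D, (T r.1).Nonempty := by
    rintro ⟨r, hr⟩
    obtain ⟨v, hv⟩ := exists_sink hr
    exact ⟨v, by simp [hT, hv]⟩
  have per : ∀ r : D, (1 : ℤ) = ∑ S ∈ (univ : Finset (Fin n)).powerset,
      (if S ⊆ T r.1 then (if S.card = 0 then 0 else (-1 : ℤ) ^ (S.card + 1)) else 0) := by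
    intro r
    rw [← Finset.sum_filter]
    have hfil : (univ : Finset (Fin n)).powerset.filter (· ⊆ T r.1) = (T r.1).powerset := by
      ext S; simp [Finset.mem_powerset, Finset.subset_univ]
    rw [hfil]
    have split : ∀ S : Finset (Fin n),
        (if S.card = 0 then (0:ℤ) else (-1 : ℤ) ^ (S.card + 1)) =
          -(-1 : ℤ) ^ S.card + (if S = (∅ : Finset (Fin n)) then 1 else 0) := by
      intro S
      rcases eq_or_ne S ∅ with h | h
      · simp [h]
      · rw [if_neg (by simpa [Finset.card_eq_zero] using h), if_neg h, pow_succ]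
        ring
    rw [Finset.sum_congr rfl (fun S _ => split S), Finset.sum_add_distrib,
      Finset.sum_neg_distrib]
    rw [Finset.sum_powerset_neg_one_pow_card, if_neg (Finset.nonempty_iff_ne_empty.mp (hTne r))]
    rw [Finset.sum_ite_eq' (T r.1).powerset (∅ : Finset (Fin n)) (fun _ => (1:ℤ))]
    simp
  have hcard : (numDAGs n : ℤ) = ∑ r : D, (1 : ℤ) := by
    simp [numDAGs, Nat.card_eq_fintype_card, hD, IsDagRel]
    exact Fintype.card_congr (Equiv.refl _)
  rw [hcard, Finset.sum_congr rfl (fun r _ => per r), Finset.sum_comm]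
  have inner : ∀ S : Finset (Fin n), ∑ r : D,
      (if S ⊆ T r.1 then (if S.card = 0 then 0 else (-1 : ℤ) ^ (S.card + 1)) else 0) =
      (if S.card = 0 then 0 else (-1 : ℤ) ^ (S.card + 1)) *
        (2 ^ (S.card * (n - S.card)) * numDAGs (n - S.card) : ℕ) := by
    intro S
    rw [← Finset.sum_filter, Finset.sum_const]
    have : (univ.filter (fun r : D => S ⊆ T r.1)).card =
        2 ^ (S.card * (n - S.card)) * numDAGs (n - S.card) := by
      rw [← Fintype.card_subtype, ← Nat.card_eq_fintype_card, ← card_sinks S]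
      apply Nat.card_congr
      refine (Equiv.subtypeSubtypeEquivSubtypeInter
        (fun r : Fin n → Fin n → Bool => IsDagRel r)
        (fun r : Fin n → Fin n → Bool => S ⊆ T r)).trans (Equiv.subtypeEquivRight ?_)
      intro r
      simp [hT, Finset.subset_iff, IsDagRel, and_comm]
    rw [this]
    push_cast
    ring
  rw [Finset.sum_congr rfl (fun S _ => inner S)]
  have grouped := Finset.sum_powerset_apply_card
    (fun m => (if m = 0 then 0 else (-1 : ℤ) ^ (m + 1)) *
      (2 ^ (m * (n - m)) * numDAGs (n - m) : ℕ)) (x := (univ : Finset (Fin n)))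
  simp only [Finset.card_eq_zero] at grouped ⊢
  rw [grouped, card_univ, Fintype.card_fin]
  have hrange : Finset.range (n + 1) = insert 0 (Finset.Icc 1 n) := by
    ext m; simp [Finset.mem_Icc]; omega
  rw [hrange, Finset.sum_insert (by simp)]
  norm_num
  refine Finset.sum_congr rfl ?_
  intro m hm
  have hm1 : m ≠ 0 := by rw [Finset.mem_Icc] at hm; omega
  rw [if_neg hm1]
  ring

lemma numDAGs_zero : numDAGs 0 = 1 := by
  have : Unique {r : Fin 0 → Fin 0 → Bool //
      (∀ v, r v v = false) ∧ ∀ v, ¬ Relation.TransGen (fun i j => r i j = true) v v} :=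
    ⟨⟨⟨fun i => i.elim0, fun v => v.elim0, fun v => v.elim0⟩⟩,
      fun r => Subtype.ext (funext fun i => i.elim0)⟩
  rw [numDAGs, Nat.card_unique]

/-- Robinson's recursion for counting labeled DAGs:
`a(0) = 1`, `a(n) = Σ_{k=1}^n (−1)^{k+1} C(n,k) 2^{k(n−k)} a(n−k)` for `n ≥ 1`, and
in particular `a(5) = 29281`. -/
theorem robinson_dag_recursion :
    numDAGs 0 = 1 ∧
    (∀ n : ℕ, 1 ≤ n →
      (numDAGs n : ℤ) = ∑ k ∈ Finset.Icc 1 n,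
        (-1 : ℤ) ^ (k + 1) * (n.choose k : ℤ) * 2 ^ (k * (n - k)) * (numDAGs (n - k) : ℤ)) ∧
    numDAGs 5 = 29281 := by
  refine ⟨numDAGs_zero, fun n hn => dag_recursion n hn, ?_⟩
  have h1 : numDAGs 1 = 1 := by
    have h := dag_recursion 1 (by norm_num)
    rw [show Finset.Icc 1 1 = ({1} : Finset ℕ) from rfl] at h
    norm_num [Nat.choose, Finset.sum_insert, Finset.mem_insert, numDAGs_zero] at h
    exact_mod_cast h
  have h2 : numDAGs 2 = 3 := by
    have h := dag_recursion 2 (by norm_num)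
    rw [show Finset.Icc 1 2 = ({1,2} : Finset ℕ) from rfl] at h
    norm_num [Nat.choose, Finset.sum_insert, Finset.mem_insert, numDAGs_zero, h1] at h
    exact_mod_cast h
  have h3 : numDAGs 3 = 25 := by
    have h := dag_recursion 3 (by norm_num)
    rw [show Finset.Icc 1 3 = ({1,2,3} : Finset ℕ) from rfl] at h
    norm_num [Nat.choose, Finset.sum_insert, Finset.mem_insert, numDAGs_zero, h1, h2] at h
    exact_mod_cast h
  have h4 : numDAGs 4 = 543 := by
    have h := dag_recursion 4 (by norm_num)
    rw [show Finset.Icc 1 4 = ({1,2,3,4} : Finset ℕ) from rfl] at h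
    norm_num [Nat.choose, Finset.sum_insert, Finset.mem_insert, numDAGs_zero, h1, h2, h3] at h
    exact_mod_cast h
  have h5 := dag_recursion 5 (by norm_num)
  rw [show Finset.Icc 1 5 = ({1,2,3,4,5} : Finset ℕ) from rfl] at h5
  norm_num [Nat.choose, Finset.sum_insert, Finset.mem_insert, numDAGs_zero, h1, h2, h3, h4] at h5
  exact_mod_cast h5
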